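/- Let X ∈ S_d with X = Σ_{i=1}^k a_i x_i x_iᵀ (x_i unit vectors, (a_i) a probability distribution), and let f be β-smooth and convex with minimizer X* over S_d. For η > 0 and each i, let v_i be a unit vector exactly maximizing v ↦ vᵀ(-∇f(X) + ηβ x_i x_iᵀ)v. Then Σ_{i=1}^k a_i [ (v_i v_iᵀ - x_i x_iᵀ)·∇f(X) + (ηβ/2)‖v_i v_iᵀ - x_i x_iᵀ‖_F² ] ≤ -(f(X) - f(X*)) + ηβ. -/

import Mathlib

open Matrix BigOperators

noncomputable def frobNorm {d : ℕ} (A : Matrix (Fin d) (Fin d) ℝ) : ℝ :=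
  Real.sqrt (∑ i, ∑ j, (A i j) ^ 2)

noncomputable def vnorm {d : ℕ} (v : Fin d → ℝ) : ℝ :=
  Real.sqrt (∑ i, (v i) ^ 2)

def dotp {d : ℕ} (A B : Matrix (Fin d) (Fin d) ℝ) : ℝ :=
  ∑ i, ∑ j, A i j * B i j

def quadForm {d : ℕ} (A : Matrix (Fin d) (Fin d) ℝ) (v : Fin d → ℝ) : ℝ :=
  ∑ i, ∑ j, v i * A i j * v j

/-- The spectrahedron: real symmetric PSD matrices with unit trace. -/
def Spectra (d : ℕ) : Set (Matrix (Fin d) (Fin d) ℝ) :=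
  {X | X.PosSemidef ∧ X.trace = 1}

/-- Projection onto the span of eigenvectors of `Y` whose eigenvalues have magnitude ≥ τ. -/
noncomputable def specProj {d : ℕ} {Y : Matrix (Fin d) (Fin d) ℝ}
    (hY : Y.IsHermitian) (τ : ℝ) : Matrix (Fin d) (Fin d) ℝ :=
  ∑ j : Fin d, if τ ≤ |hY.eigenvalues j| then
    Matrix.vecMulVec (fun i => hY.eigenvectorBasis j i) (fun i => hY.eigenvectorBasis j i)
  else 0

lemma vnorm_one_sum {d : ℕ} {u : Fin d → ℝ} (h : vnorm u = 1) : ∑ i, (u i)^2 = 1 := by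
  rwa [vnorm, Real.sqrt_eq_one] at h

lemma dsum_mul_pair {d : ℕ} (c : ℝ) (p : Fin d → ℝ) :
    ∑ i, ∑ j, c * (p i * p j) = c * (∑ i, p i)^2 := by
  rw [sq, Finset.sum_mul_sum, Finset.mul_sum]
  exact Finset.sum_congr rfl fun i _ => by rw [Finset.mul_sum]

lemma triple_pull {d k : ℕ} (F : Fin d → Fin d → Fin k → ℝ) :
    ∑ i, ∑ j, ∑ l, F i j l = ∑ l, ∑ i, ∑ j, F i j l := by
  have h1 : ∀ i : Fin d, ∑ j, ∑ l, F i j l = ∑ l, ∑ j, F i j l :=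
    fun i => Finset.sum_comm
  simp only [h1]
  exact Finset.sum_comm

lemma dotp_vecMulVec {d : ℕ} (u : Fin d → ℝ) (B : Matrix (Fin d) (Fin d) ℝ) :
    dotp (Matrix.vecMulVec u u) B = quadForm B u := by
  unfold dotp quadForm
  refine Finset.sum_congr rfl fun i _ => Finset.sum_congr rfl fun j _ => ?_
  simp [Matrix.vecMulVec_apply]; ring

lemma quadForm_sub_smul {d : ℕ} (G : Matrix (Fin d) (Fin d) ℝ) (c : ℝ) (x u : Fin d → ℝ) :
    quadForm (-G + c • Matrix.vecMulVec x x) u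
      = -(quadForm G u) + c * (∑ i, u i * x i)^2 := by
  unfold quadForm
  have key : ∀ i j : Fin d, u i * (-G + c • Matrix.vecMulVec x x) i j * u j
      = -(u i * G i j * u j) + c * ((u i * x i) * (u j * x j)) := by
    intro i j; simp [Matrix.vecMulVec_apply]; ring
  simp only [key, Finset.sum_add_distrib, Finset.sum_neg_distrib]
  rw [dsum_mul_pair c (fun i => u i * x i)]

lemma frob_sq {d : ℕ} {u w : Fin d → ℝ} (hu : vnorm u = 1) (hw : vnorm w = 1) :
    (frobNorm (Matrix.vecMulVec u u - Matrix.vecMulVec w w))^2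
      = 2 - 2 * (∑ i, u i * w i)^2 := by
  have hnn : (0:ℝ) ≤ ∑ i, ∑ j, ((Matrix.vecMulVec u u - Matrix.vecMulVec w w) i j)^2 := by
    positivity
  rw [frobNorm, Real.sq_sqrt hnn]
  have expand : ∀ i j : Fin d, ((Matrix.vecMulVec u u - Matrix.vecMulVec w w) i j)^2
      = (u i)^2 * (u j)^2 + (-2) * ((u i * w i) * (u j * w j)) + (w i)^2 * (w j)^2 := by
    intro i j; simp [Matrix.vecMulVec_apply]; ring
  simp only [expand, Finset.sum_add_distrib]
  have h1 : ∑ i : Fin d, ∑ j : Fin d, (u i)^2 * (u j)^2 = 1 := by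
    rw [← Finset.sum_mul_sum, vnorm_one_sum hu]; ring_nf
  have h2 : ∑ i : Fin d, ∑ j : Fin d, (w i)^2 * (w j)^2 = 1 := by
    rw [← Finset.sum_mul_sum, vnorm_one_sum hw]; ring_nf
  rw [h1, h2, dsum_mul_pair (-2) (fun i => u i * w i)]
  ring

lemma entry_decomp {d : ℕ} {Y : Matrix (Fin d) (Fin d) ℝ} (hY : Y.IsHermitian) (i j : Fin d) :
    Y i j = ∑ l, hY.eigenvalues l * hY.eigenvectorBasis l i * hY.eigenvectorBasis l j := by
  conv_lhs => rw [hY.spectral_theorem]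
  simp [Matrix.mul_apply, Matrix.diagonal_apply, Finset.mul_sum, Finset.sum_mul]
  congr 1; ext l
  ring

lemma eig_unit {d : ℕ} {Y : Matrix (Fin d) (Fin d) ℝ} (hY : Y.IsHermitian) (j : Fin d) :
    vnorm (fun i => hY.eigenvectorBasis j i) = 1 := by
  have h := hY.eigenvectorBasis.orthonormal.1 j
  rw [EuclideanSpace.norm_eq] at h
  simpa [vnorm, sq_abs] using h

lemma dotp_decomp {d : ℕ} {Y : Matrix (Fin d) (Fin d) ℝ} (hY : Y.IsHermitian)
    (G : Matrix (Fin d) (Fin d) ℝ) :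
    dotp Y G = ∑ l, hY.eigenvalues l * quadForm G (fun i => hY.eigenvectorBasis l i) := by
  unfold dotp
  have key : ∀ i j : Fin d, Y i j * G i j
      = ∑ l, hY.eigenvalues l * (hY.eigenvectorBasis l i * G i j * hY.eigenvectorBasis l j) := by
    intro i j
    rw [entry_decomp hY, Finset.sum_mul]
    exact Finset.sum_congr rfl fun l _ => by ring
  simp only [key]
  rw [triple_pull]
  refine Finset.sum_congr rfl fun l _ => ?_
  rw [quadForm, Finset.mul_sum]
  exact Finset.sum_congr rfl fun i _ => (Finset.mul_sum _ _ _).symm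

lemma sum_eig_one {d : ℕ} {Y : Matrix (Fin d) (Fin d) ℝ} (hY : Y.IsHermitian)
    (htr : Y.trace = 1) : ∑ l, hY.eigenvalues l = 1 := by
  have h : Y.trace = ∑ i, Y i i := rfl
  rw [h] at htr
  have key : ∀ i : Fin d, Y i i
      = ∑ l, hY.eigenvalues l * (hY.eigenvectorBasis l i)^2 := by
    intro i
    rw [entry_decomp hY]
    exact Finset.sum_congr rfl fun l _ => by ring
  rw [Finset.sum_congr rfl (fun i _ => key i), Finset.sum_comm] at htr
  rw [← htr]
  refine Finset.sum_congr rfl fun l _ => ?_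
  rw [← Finset.mul_sum, vnorm_one_sum (eig_unit hY l), mul_one]

lemma dotp_sum_decomp {d k : ℕ} (a : Fin k → ℝ) (x : Fin k → Fin d → ℝ)
    (G : Matrix (Fin d) (Fin d) ℝ) :
    dotp (∑ m, a m • Matrix.vecMulVec (x m) (x m)) G = ∑ m, a m * quadForm G (x m) := by
  unfold dotp
  have key : ∀ i j : Fin d, (∑ m, a m • Matrix.vecMulVec (x m) (x m)) i j * G i j
      = ∑ m, a m * (x m i * G i j * x m j) := by
    intro i j
    rw [Matrix.sum_apply, Finset.sum_mul]
    refine Finset.sum_congr rfl fun m _ => ?_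
    simp [Matrix.vecMulVec_apply]; ring
  simp only [key]
  rw [triple_pull]
  refine Finset.sum_congr rfl fun m _ => ?_
  rw [quadForm, Finset.mul_sum]
  exact Finset.sum_congr rfl fun i _ => (Finset.mul_sum _ _ _).symm

lemma dotp_comm {d : ℕ} (A B : Matrix (Fin d) (Fin d) ℝ) : dotp A B = dotp B A := by
  unfold dotp
  exact Finset.sum_congr rfl fun i _ => Finset.sum_congr rfl fun j _ => mul_comm _ _

lemma dotp_sub_right {d : ℕ} (A B C : Matrix (Fin d) (Fin d) ℝ) :
    dotp A (B - C) = dotp A B - dotp A C := by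
  unfold dotp
  simp [Matrix.sub_apply, mul_sub, Finset.sum_sub_distrib]

lemma dotp_sub_left {d : ℕ} (A B C : Matrix (Fin d) (Fin d) ℝ) :
    dotp (A - B) C = dotp A C - dotp B C := by
  unfold dotp
  simp [Matrix.sub_apply, sub_mul, Finset.sum_sub_distrib]

theorem stmt12 {d k : ℕ} (β : ℝ) (hβ : 0 < β)
    (f : Matrix (Fin d) (Fin d) ℝ → ℝ)
    (g : Matrix (Fin d) (Fin d) ℝ → Matrix (Fin d) (Fin d) ℝ)
    (hconv : ∀ A B, f A + dotp (g A) (B - A) ≤ f B)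
    (hsmooth : ∀ A B, f B ≤ f A + dotp (g A) (B - A) + β / 2 * (frobNorm (B - A)) ^ 2)
    (X Xs : Matrix (Fin d) (Fin d) ℝ)
    (hXmem : X ∈ Spectra d) (hXs : Xs ∈ Spectra d)
    (hmin : ∀ Z ∈ Spectra d, f Xs ≤ f Z)
    (a : Fin k → ℝ) (x : Fin k → Fin d → ℝ)
    (ha : ∀ i, 0 ≤ a i) (hsum : ∑ i, a i = 1)
    (hunit : ∀ i, vnorm (x i) = 1)
    (hdecomp : X = ∑ i, a i • Matrix.vecMulVec (x i) (x i))
    (η : ℝ) (hη : 0 < η)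
    (v : Fin k → Fin d → ℝ) (hvunit : ∀ i, vnorm (v i) = 1)
    (hvopt : ∀ i, ∀ u, vnorm u = 1 →
      quadForm (-(g X) + (η * β) • Matrix.vecMulVec (x i) (x i)) u
        ≤ quadForm (-(g X) + (η * β) • Matrix.vecMulVec (x i) (x i)) (v i)) :
    ∑ i, a i *
        (dotp (Matrix.vecMulVec (v i) (v i) - Matrix.vecMulVec (x i) (x i)) (g X)
          + η * β / 2 *
            (frobNorm (Matrix.vecMulVec (v i) (v i) - Matrix.vecMulVec (x i) (x i))) ^ 2)
      ≤ -(f X - f Xs) + η * β := by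
  set G := g X with hG
  set M : Fin k → Matrix (Fin d) (Fin d) ℝ :=
    fun i => -G + (η * β) • Matrix.vecMulVec (x i) (x i) with hM
  have hXsH : Xs.IsHermitian := hXs.1.1
  have hlnn : ∀ l, 0 ≤ hXsH.eigenvalues l := fun l => hXs.1.eigenvalues_nonneg l
  have hlsum : ∑ l, hXsH.eigenvalues l = 1 := sum_eig_one hXsH hXs.2
  -- Per-i identity
  have hterm : ∀ i,
      dotp (Matrix.vecMulVec (v i) (v i) - Matrix.vecMulVec (x i) (x i)) G
        + η * β / 2 *
          (frobNorm (Matrix.vecMulVec (v i) (v i) - Matrix.vecMulVec (x i) (x i))) ^ 2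
      = -(quadForm (M i) (v i)) - quadForm G (x i) + η * β := by
    intro i
    rw [dotp_sub_left, dotp_vecMulVec, dotp_vecMulVec,
      frob_sq (hvunit i) (hunit i), hM, quadForm_sub_smul]
    ring
  -- Bound on -(quadForm (M i) (v i))
  have hbound : ∀ i, -(quadForm (M i) (v i)) ≤ dotp Xs G := by
    intro i
    rw [dotp_decomp hXsH G]
    calc -(quadForm (M i) (v i))
        = ∑ l, hXsH.eigenvalues l * (-(quadForm (M i) (v i))) := by
          rw [← Finset.sum_mul, hlsum, one_mul]
      _ ≤ ∑ l, hXsH.eigenvalues l * quadForm G (fun m => hXsH.eigenvectorBasis l m) := by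
          refine Finset.sum_le_sum fun l _ => mul_le_mul_of_nonneg_left ?_ (hlnn l)
          have h1 := hvopt i (fun m => hXsH.eigenvectorBasis l m) (eig_unit hXsH l)
          have h2 : -(quadForm (M i) (v i))
              ≤ -(quadForm (M i) (fun m => hXsH.eigenvectorBasis l m)) := by
            rw [hM]; linarith
          refine h2.trans ?_
          rw [hM, quadForm_sub_smul]
          have : 0 ≤ η * β * (∑ m, hXsH.eigenvectorBasis l m * x i m)^2 := by positivity
          linarith
  -- Sum of quadForm over x equals dotp X G
  have hXdot : ∑ i, a i * quadForm G (x i) = dotp X G := by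
    rw [hdecomp, dotp_sum_decomp]
  -- Convexity bound
  have hconvb : dotp Xs G - dotp X G ≤ -(f X - f Xs) := by
    have := hconv X Xs
    rw [dotp_sub_right] at this
    rw [dotp_comm Xs G, dotp_comm X G]
    linarith
  calc ∑ i, a i *
        (dotp (Matrix.vecMulVec (v i) (v i) - Matrix.vecMulVec (x i) (x i)) G
          + η * β / 2 *
            (frobNorm (Matrix.vecMulVec (v i) (v i) - Matrix.vecMulVec (x i) (x i))) ^ 2)
      = ∑ i, a i * (-(quadForm (M i) (v i)) - quadForm G (x i) + η * β) := by
        exact Finset.sum_congr rfl fun i _ => by rw [hterm i]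
    _ ≤ ∑ i, a i * (dotp Xs G - quadForm G (x i) + η * β) := by
        refine Finset.sum_le_sum fun i _ => mul_le_mul_of_nonneg_left ?_ (ha i)
        have := hbound i
        linarith
    _ = dotp Xs G - dotp X G + η * β := by
        have expand : ∀ i : Fin k, a i * (dotp Xs G - quadForm G (x i) + η * β)
            = a i * (dotp Xs G + η * β) - a i * quadForm G (x i) := by
          intro i; ring
        simp only [expand]
        rw [Finset.sum_sub_distrib, ← Finset.sum_mul, hsum, hXdot]
        ring
    _ ≤ -(f X - f Xs) + η * β := by linarith
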